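/- Assume (H1) and (H3). If u* is an amenable complete trajectory at q ∈ Q and v* is a complete trajectory at q such that V(u*(t) − v*(t)) ≤ 0 for every t ∈ ℝ (where V(u) := (Pu,u)), then v* is amenable. -/

import Mathlib

open MeasureTheory Set Bornology Filter Topology RealInnerProductSpace

noncomputable section

variable {Q H : Type*}

section Defs
variable [MetricSpace Q] [NormedAddCommGroup H] [InnerProductSpace ℝ H] [CompleteSpace H]

def IsFlow (ϑ : ℝ → Q → Q) : Prop :=
  (∀ q, ϑ 0 q = q) ∧ (∀ t s q, ϑ (t + s) q = ϑ t (ϑ s q)) ∧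
    Continuous fun p : ℝ × Q => ϑ p.1 p.2

def IsCocycle (ϑ : ℝ → Q → Q) (ψ : ℝ → Q → H → H) : Prop :=
  (∀ q u, ψ 0 q u = u) ∧
  (∀ t s : ℝ, 0 ≤ t → 0 ≤ s → ∀ q u, ψ (t + s) q u = ψ t (ϑ s q) (ψ s q u)) ∧
  ContinuousOn (fun p : ℝ × Q × H => ψ p.1 p.2.1 p.2.2) {p : ℝ × Q × H | 0 ≤ p.1}

def IsCompleteTraj (ϑ : ℝ → Q → Q) (ψ : ℝ → Q → H → H) (q : Q) (u : ℝ → H) : Prop :=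
  Continuous u ∧ ∀ t s : ℝ, 0 ≤ t → u (t + s) = ψ t (ϑ s q) (u s)

def IsAmenable (ν : ℝ) (u : ℝ → H) : Prop :=
  IntegrableOn (fun s : ℝ => Real.exp (2 * ν * s) * ‖u s‖ ^ 2) (Set.Iic (0:ℝ))

def amenSet (ϑ : ℝ → Q → Q) (ψ : ℝ → Q → H → H) (ν : ℝ) (q : Q) : Set H :=
  {u₀ | ∃ u : ℝ → H, IsCompleteTraj ϑ ψ q u ∧ IsAmenable ν u ∧ u 0 = u₀}

structure HypH1 (P : H →L[ℝ] H) (Hplus Hminus : Submodule ℝ H) : Prop where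
  selfAdj : IsSelfAdjoint P
  closed_plus : IsClosed (Hplus : Set H)
  orth : Hminus = Hplusᗮ
  inv_plus : ∀ u ∈ Hplus, P u ∈ Hplus
  inv_minus : ∀ u ∈ Hminus, P u ∈ Hminus
  pos : ∀ u ∈ Hplus, u ≠ 0 → (0:ℝ) < ⟪P u, u⟫
  neg : ∀ u ∈ Hminus, u ≠ 0 → ⟪P u, u⟫ < 0

def HypH2 (Hminus : Submodule ℝ H) (j : ℕ) : Prop :=
  FiniteDimensional ℝ Hminus ∧ Module.finrank ℝ Hminus = j

def HypH3 (ψ : ℝ → Q → H → H) (P : H →L[ℝ] H) (δ ν : ℝ) : Prop :=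
  0 < δ ∧ 0 < ν ∧ ∀ (q : Q) (u v : H) (l r : ℝ), 0 ≤ l → l ≤ r →
    Real.exp (2 * ν * r) * ⟪P (ψ r q u - ψ r q v), ψ r q u - ψ r q v⟫ -
      Real.exp (2 * ν * l) * ⟪P (ψ l q u - ψ l q v), ψ l q u - ψ l q v⟫ ≤
      -δ * ∫ s in l..r, Real.exp (2 * ν * s) * ‖ψ s q u - ψ s q v‖ ^ 2

def IsOrthProjOnto (Hminus : Submodule ℝ H) (Pi : H →L[ℝ] H) : Prop :=
  (∀ u, Pi u ∈ Hminus) ∧ ∀ u, u - Pi u ∈ Hminusᗮ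

def HypCOM2 (ψ : ℝ → Q → H → H) : Prop :=
  ∃ tc : ℝ, 0 < tc ∧ ∀ (q : Q) (s : Set H), IsBounded s → IsCompact (closure (ψ tc q '' s))

def HypCOM3 (ψ : ℝ → Q → H → H) : Prop :=
  ∀ (q : Q) (u₀ : H), IsBounded ((fun t => ψ t q u₀) '' Set.Ici (0:ℝ)) →
    IsCompact (closure ((fun t => ψ t q u₀) '' Set.Ici (0:ℝ)))

def LyapunovStable (ψ : ℝ → Q → H → H) (q : Q) (v : ℝ → H) : Prop :=
  ∀ ε > 0, ∃ η > 0, ∀ u₀ : H, ‖u₀ - v 0‖ < η → ∀ t ≥ 0, ‖ψ t q u₀ - v t‖ < ε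

end Defs

def circleFlow (σ : ℝ) : ℝ → AddCircle σ → AddCircle σ := fun t θ => θ + (t : AddCircle σ)

/-- Lemma 1, item 2: under (H1) and (H3), if `u*` is amenable and `v*` is a complete
trajectory at the same `q` with `V(u*(t) − v*(t)) ≤ 0` for all `t`, then `v*` is
amenable. -/
theorem amenable_of_nonpositive_V
    {Q H : Type*} [MetricSpace Q] [NormedAddCommGroup H] [InnerProductSpace ℝ H]
    [CompleteSpace H] [TopologicalSpace.SeparableSpace H]
    (ϑ : ℝ → Q → Q) (ψ : ℝ → Q → H → H)
    (hflow : IsFlow ϑ) (hcoc : IsCocycle ϑ ψ)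
    (P : H →L[ℝ] H) (Hplus Hminus : Submodule ℝ H)
    (h1 : HypH1 P Hplus Hminus)
    (δ ν : ℝ) (h3 : HypH3 ψ P δ ν)
    (q : Q) (u v : ℝ → H)
    (hu : IsCompleteTraj ϑ ψ q u) (hua : IsAmenable ν u)
    (hv : IsCompleteTraj ϑ ψ q v)
    (hV : ∀ t : ℝ, ⟪P (u t - v t), u t - v t⟫ ≤ 0) :
    IsAmenable ν v := by
  obtain ⟨hδ, hν, h3⟩ := h3
  set w : ℝ → H := fun s => u s - v s with hwdef
  have hwc : Continuous w := hu.1.sub hv.1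
  set g : ℝ → ℝ := fun s => Real.exp (2 * ν * s) * ‖w s‖ ^ 2 with hgdef
  have hgc : Continuous g := by
    apply Continuous.mul
    · exact Real.continuous_exp.comp (by continuity)
    · exact (hwc.norm.pow 2)
  have hg0 : ∀ s, 0 ≤ g s := fun s =>
    mul_nonneg (Real.exp_pos _).le (by positivity)
  set C : ℝ := -⟪P (w 0), w 0⟫ / δ with hCdef
  -- key bound
  have key : ∀ a : ℝ, a ≤ 0 → ∫ s in a..0, g s ≤ C := by
    intro a ha
    have hmain := h3 (ϑ a q) (u a) (v a) 0 (-a) le_rfl (by linarith)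
    have heu : ∀ s : ℝ, 0 ≤ s → ψ s (ϑ a q) (u a) = u (s + a) := by
      intro s hs; exact (hu.2 s a hs).symm
    have hev : ∀ s : ℝ, 0 ≤ s → ψ s (ϑ a q) (v a) = v (s + a) := by
      intro s hs; exact (hv.2 s a hs).symm
    have hI : (∫ s in (0:ℝ)..(-a),
        Real.exp (2 * ν * s) * ‖ψ s (ϑ a q) (u a) - ψ s (ϑ a q) (v a)‖ ^ 2)
        = Real.exp (2 * ν * (-a)) * ∫ s in a..0, g s := by
      have h1 : (∫ s in (0:ℝ)..(-a),
          Real.exp (2 * ν * s) * ‖ψ s (ϑ a q) (u a) - ψ s (ϑ a q) (v a)‖ ^ 2)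
          = ∫ s in (0:ℝ)..(-a), Real.exp (2 * ν * (-a)) * g (s + a) := by
        apply intervalIntegral.integral_congr
        intro s hs
        rw [Set.uIcc_of_le (by linarith : (0:ℝ) ≤ -a)] at hs
        have hs0 : 0 ≤ s := hs.1
        simp only [heu s hs0, hev s hs0, hgdef]
        rw [← mul_assoc, ← Real.exp_add]
        ring_nf
        rfl
      rw [h1, intervalIntegral.integral_const_mul]
      congr 1
      have := intervalIntegral.integral_comp_add_right (a := (0:ℝ)) (b := -a) g a
      simpa using this
    rw [heu (-a) (by linarith), hev (-a) (by linarith), hcoc.1, hcoc.1, hI] at hmain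
    simp only [neg_add_cancel, mul_zero, Real.exp_zero, one_mul] at hmain
    have hVa : ⟪P (u a - v a), u a - v a⟫ ≤ 0 := hV a
    have hV0 : ⟪P (u 0 - v 0), u 0 - v 0⟫ ≤ 0 := hV 0
    have hexp : (0:ℝ) < Real.exp (2 * ν * (-a)) := Real.exp_pos _
    have hexp2 : (0:ℝ) < Real.exp (2 * ν * 0) := Real.exp_pos _
    have hw0 : w 0 = u 0 - v 0 := rfl
    rw [hCdef, hw0, le_div_iff₀ hδ]
    nlinarith [hmain, hVa, hV0, hexp, mul_pos hexp hδ]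
  -- integrability of g on Iic 0
  have hgint : IntegrableOn g (Set.Iic (0:ℝ)) := by
    apply MeasureTheory.integrableOn_Iic_of_intervalIntegral_norm_bounded C (0:ℝ)
      (a := fun n : ℕ => -(n : ℝ)) (l := atTop)
    · intro n
      exact (hgc.integrableOn_Icc (a := -(n:ℝ)) (b := 0)).mono_set Set.Ioc_subset_Icc_self
    · exact tendsto_neg_atBot_iff.mpr tendsto_natCast_atTop_atTop
    · filter_upwards with n
      have : ∀ x, ‖g x‖ = g x := fun x => Real.norm_of_nonneg (hg0 x)
      calc (∫ x in (-(n:ℝ))..0, ‖g x‖) = ∫ x in (-(n:ℝ))..0, g x := by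
            simp only [this]
        _ ≤ C := key (-(n:ℝ)) (neg_nonpos.mpr (Nat.cast_nonneg n))
  -- conclude for v
  have hvmeas : AEStronglyMeasurable (fun s : ℝ => Real.exp (2 * ν * s) * ‖v s‖ ^ 2)
      (volume.restrict (Set.Iic (0:ℝ))) := by
    apply Continuous.aestronglyMeasurable
    exact (Real.continuous_exp.comp (by continuity)).mul (hv.1.norm.pow 2)
  refine Integrable.mono' ((hua.const_mul 2).add (hgint.const_mul 2)) hvmeas ?_
  filter_upwards with s
  have hnn : 0 ≤ Real.exp (2 * ν * s) * ‖v s‖ ^ 2 := by positivity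
  rw [Real.norm_of_nonneg hnn]
  have hb : ‖v s‖ ^ 2 ≤ 2 * ‖u s‖ ^ 2 + 2 * ‖w s‖ ^ 2 := by
    have : v s = u s - w s := by simp [hwdef]
    rw [this]
    have h2 : ‖u s - w s‖ ^ 2 ≤ (‖u s‖ + ‖w s‖) ^ 2 :=
      pow_le_pow_left₀ (norm_nonneg _) (norm_sub_le (u s) (w s)) 2
    nlinarith [h2, sq_nonneg (‖u s‖ - ‖w s‖)]
  have hexp : (0:ℝ) ≤ Real.exp (2 * ν * s) := (Real.exp_pos _).le
  have hgs : g s = Real.exp (2 * ν * s) * ‖w s‖ ^ 2 := rfl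
  simp only [Pi.add_apply]
  nlinarith [mul_le_mul_of_nonneg_left hb hexp, hgs]
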